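/- Let G be a finite group and A, B subgroups of G with G = AB. (Forward direction) If γ is a gamma function on G with B ≤ ker(γ), then γ(ab) = γ(a) for all a ∈ A, b ∈ B, so γ(G) = γ(A); and if moreover A is γ(A)-invariant, then the restriction γ' = γ|_A : A → Aut(G) is a relative gamma function on A, and ker(γ) is invariant under the subgroup { γ'(a)·ι(a) : a ∈ A } of Aut(G), where ι(a) is conjugation x ↦ a⁻¹xa. (Converse) If γ' : A → Aut(G) is a relative gamma function with γ'(A ∩ B) = {1} and B invariant under { γ'(a)·ι(a) : a ∈ A }, then γ(ab) := γ'(a) (for a ∈ A, b ∈ B) is a well-defined gamma function on G, and ker(γ) = ker(γ')·B. -/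

import Mathlib

/- Formalization of results from "Hopf-Galois structures on extensions of degree p²q and
skew braces of order p²q: the cyclic Sylow p-subgroup case" (Campedel, Caranti, Del Corso).

Conventions: the paper composes permutations/automorphisms left-to-right and writes
`x^α` for the action; in Mathlib composition is right-to-left, so the paper's product
`αβ` is rendered as `β * α`, the paper's `x^α` as `α x`, and the paper's conjugate
`α^β = β⁻¹αβ` as `β * α * β⁻¹`. -/

namespace HGS

universe u v

variable {G : Type*} [Group G]

/-- A gamma function (GF) on `G`: a map `γ : G → Aut G` satisfying the gamma functional
equation `γ(g^{γ(h)}·h) = γ(g)γ(h)` (the right-hand side is the paper's product, which in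
Mathlib's composition order reads `γ h * γ g`). -/
def IsGammaFunction (γ : G → MulAut G) : Prop :=
  ∀ g h : G, γ (γ h g * h) = γ h * γ g

/-- The circle operation `g ∘ h = g^{γ(h)} · h` associated to a gamma function. -/
def circ (γ : G → MulAut G) (g h : G) : G := γ h g * h

/-- A relative gamma function (RGF) on a subgroup `A ≤ G` (encoded as a function on all
of `G` whose values outside `A` are irrelevant): `A` is `γ(A)`-invariant and the gamma
functional equation holds on `A`. -/
def IsRGFOn (A : Subgroup G) (γ : G → MulAut G) : Prop :=
  (∀ x ∈ A, ∀ y ∈ A, γ y x ∈ A) ∧ (∀ x ∈ A, ∀ y ∈ A, γ (γ y x * y) = γ y * γ x)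

/-- Proposition `prop:1.4` of the paper: lifting and restriction.
Here `ι(a)` is the inner automorphism `x ↦ a⁻¹ x a`, so the paper's `γ'(a)ι(a)` applied
to `x` is `a⁻¹ * (γ' a x) * a`. -/
theorem lifting_and_restriction
    {G : Type u} [Group G] [Finite G] (A B : Subgroup G)
    (hAB : ∀ g : G, ∃ a ∈ A, ∃ b ∈ B, g = a * b) :
    -- Forward direction
    (∀ γ : G → MulAut G, IsGammaFunction γ → (∀ b ∈ B, γ b = 1) →
      ((∀ a ∈ A, ∀ b ∈ B, γ (a * b) = γ a) ∧
       Set.range γ = γ '' (A : Set G) ∧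
       ((∀ x ∈ A, ∀ y ∈ A, γ y x ∈ A) →
         IsRGFOn A γ ∧
         ∀ k : G, γ k = 1 → ∀ a ∈ A, γ (a⁻¹ * γ a k * a) = 1))) ∧
    -- Converse direction
    (∀ γ' : G → MulAut G, IsRGFOn A γ' →
      (∀ x ∈ A ⊓ B, γ' x = 1) →
      (∀ b ∈ (B : Subgroup G), ∀ a ∈ A, a⁻¹ * γ' a b * a ∈ B) →
      ∃ γ : G → MulAut G, IsGammaFunction γ ∧
        (∀ a ∈ A, ∀ b ∈ B, γ (a * b) = γ' a) ∧
        (∀ g : G, γ g = 1 ↔ ∃ a ∈ A, ∃ b ∈ B, γ' a = 1 ∧ g = a * b)) := by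
  constructor
  · -- Forward direction
    intro γ hγ hB
    have hstep : ∀ g : G, ∀ b ∈ B, γ (g * b) = γ g := by
      intro g b hb
      have h := hγ g b
      rw [hB b hb] at h
      simpa using h
    have hone : γ 1 = 1 := by
      have h := hγ 1 1
      simp only [map_one, one_mul] at h
      exact (mul_eq_left.mp h.symm)
    have hinv : ∀ a : G, γ ((γ a)⁻¹ a⁻¹) = (γ a)⁻¹ := by
      intro a
      have h := hγ ((γ a)⁻¹ a⁻¹) a
      have e1 : γ a ((γ a)⁻¹ a⁻¹) = a⁻¹ := by simp
      rw [e1, inv_mul_cancel, hone] at h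
      exact eq_inv_of_mul_eq_one_right h.symm
    refine ⟨?_, ?_, ?_⟩
    · intro a _ b hb; exact hstep a b hb
    · ext α
      constructor
      · rintro ⟨g, rfl⟩
        obtain ⟨a, ha, b, hb, rfl⟩ := hAB g
        exact ⟨a, ha, (hstep a b hb).symm⟩
      · rintro ⟨a, _, rfl⟩
        exact ⟨a, rfl⟩
    · intro hInv
      refine ⟨⟨hInv, fun x _ y _ => hγ x y⟩, ?_⟩
      intro k hk a _
      -- set m = γ a k * a, a' = (γ a)⁻¹ a⁻¹
      have hm : γ (γ a k * a) = γ a := by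
        have h := hγ k a
        rw [hk, mul_one] at h
        exact h
      have h := hγ ((γ a)⁻¹ a⁻¹) (γ a k * a)
      rw [hm, hinv a, mul_inv_cancel] at h
      have e1 : γ a ((γ a)⁻¹ a⁻¹) = a⁻¹ := by simp
      rw [e1] at h
      rw [show a⁻¹ * γ a k * a = a⁻¹ * (γ a k * a) by group]
      exact h
  · -- Converse direction
    intro γ' hRGF hcap hBstable
    choose af haf bf hbf hg using hAB
    set γ : G → MulAut G := fun g => γ' (af g) with hγdef
    -- well-definedness
    have welldef : ∀ g : G, ∀ x ∈ A, ∀ y ∈ B, g = x * y → γ g = γ' x := by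
      intro g x hx y hy hgxy
      have h2 : af g * bf g = x * y := (hg g).symm.trans hgxy
      have hcA : x⁻¹ * af g ∈ A := mul_mem (inv_mem hx) (haf g)
      have hcB : x⁻¹ * af g ∈ B := by
        have e : x⁻¹ * af g = y * (bf g)⁻¹ := by
          calc x⁻¹ * af g = x⁻¹ * (af g * bf g) * (bf g)⁻¹ := by group
          _ = x⁻¹ * (x * y) * (bf g)⁻¹ := by rw [h2]
          _ = y * (bf g)⁻¹ := by group
        rw [e]
        exact mul_mem hy (inv_mem (hbf g))
      have hc1 : γ' (x⁻¹ * af g) = 1 := hcap _ (Subgroup.mem_inf.mpr ⟨hcA, hcB⟩)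
      have h := hRGF.2 x hx (x⁻¹ * af g) hcA
      rw [hc1] at h
      simp only [MulAut.one_apply, one_mul, mul_one] at h
      have e2 : x * (x⁻¹ * af g) = af g := by group
      rw [e2] at h
      exact h
    refine ⟨γ, ?_, ?_, ?_⟩
    · intro g h
      have hAg := haf g; have hAh := haf h
      have hXA : γ' (af h) (af g) * af h ∈ A :=
        mul_mem (hRGF.1 (af g) hAg (af h) hAh) hAh
      have hYB : ((af h)⁻¹ * γ' (af h) (bf g) * af h) * bf h ∈ B :=
        mul_mem (hBstable (bf g) (hbf g) (af h) hAh) (hbf h)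
      have hdecomp : γ (h) (g) * h =
          (γ' (af h) (af g) * af h) * (((af h)⁻¹ * γ' (af h) (bf g) * af h) * bf h) := by
        show γ' (af h) g * h = _
        calc γ' (af h) g * h = γ' (af h) (af g * bf g) * (af h * bf h) := by
              rw [← hg g, ← hg h]
        _ = _ := by rw [map_mul]; group
      rw [hdecomp, welldef _ _ hXA _ hYB rfl, hRGF.2 (af g) hAg (af h) hAh]
    · intro a ha b hb
      exact welldef (a * b) a ha b hb rfl
    · intro g
      constructor
      · intro h1
        exact ⟨af g, haf g, bf g, hbf g, h1, hg g⟩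
      · rintro ⟨a, ha, b, hb, h1, rfl⟩
        rw [welldef (a * b) a ha b hb rfl, h1]
end HGS
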